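/- Let Δ(d,n) = Conv({e_{i₁}+⋯+e_{i_d} : {i₁,…,i_d} ∈ C([n],d)}) be the hypersimplex and Δ(p,q;n) = Conv(Δ(p,n) ∪ Δ(q,n)) with p ≤ q. For S, T ⊆ [n] with |S| = p−1, |T| = q+1, and S ⊆ T, the polytope Δ_{S,T} := Conv({e_{S∪{i}}, e_{T∖{i}} : i ∈ T∖S}) is a face of Δ(p,q;n); specifically, it is the set of points of Δ(p,q;n) maximizing the linear functional L(x) = Σ_{i∈S} x_i − Σ_{j∉T} x_j. -/

import Mathlib

open Finset

/-- The 0/1 indicator vector `e_I ∈ ℝⁿ` of a subset `I ⊆ [n]`. -/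
def eInd {n : ℕ} (I : Finset (Fin n)) : Fin n → ℝ := fun i => if i ∈ I then 1 else 0

/-- The minimum of `f` over the finite set `s` is attained at least twice. -/
def MinTwiceOn {α : Type*} [DecidableEq α] (s : Finset α) (f : α → ℝ) : Prop :=
  ∃ a ∈ s, ∃ b ∈ s, a ≠ b ∧ f a = f b ∧ ∀ c ∈ s, f a ≤ f c

/-- The minimum of the three reals `a`, `b`, `c` is attained at least twice. -/
def ThreeMinTwice (a b c : ℝ) : Prop :=
  (a = b ∧ a ≤ c) ∨ (a = c ∧ a ≤ b) ∨ (b = c ∧ b ≤ a)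

/-- `x` is a tropical Plücker vector of rank `d` on `[n]`: for every `S` of size `d-2`
and distinct `i,j,k,l ∉ S`, the minimum of the three pairwise sums is attained twice. -/
def TropPlucker (n d : ℕ) (x : Finset (Fin n) → ℝ) : Prop :=
  ∀ (S : Finset (Fin n)) (i j k l : Fin n),
    S.card = d - 2 → i ∉ S → j ∉ S → k ∉ S → l ∉ S →
    i ≠ j → i ≠ k → i ≠ l → j ≠ k → j ≠ l → k ≠ l →
    ThreeMinTwice
      (x (S ∪ {i, j}) + x (S ∪ {k, l}))
      (x (S ∪ {i, k}) + x (S ∪ {j, l}))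
      (x (S ∪ {i, l}) + x (S ∪ {j, k}))

/-- The linear functional on `ℝⁿ` with covector `a`. -/
def lin {n : ℕ} (a : Fin n → ℝ) (z : Fin n → ℝ) : ℝ := ∑ i, a i * z i

/-- `[u,v]` is an edge of the polytope with (finite) vertex set `V`: some linear
functional attains its maximum over `V` exactly at `u` and `v`, `u ≠ v`. -/
def IsEdge {n : ℕ} (V : Set (Fin n → ℝ)) (u v : Fin n → ℝ) : Prop :=
  u ∈ V ∧ v ∈ V ∧ u ≠ v ∧
  ∃ a : Fin n → ℝ, (∀ z ∈ V, lin a z ≤ lin a u) ∧ lin a u = lin a v ∧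
    ∀ z ∈ V, lin a z = lin a u → z = u ∨ z = v

/-- `[u,v]` is a 1-cell of the regular subdivision of the polytope with vertex set `V`
induced by the weights `w`: some affine functional `z ↦ lin a z + c` is dominated by `w`
on `V` and touches `w` exactly at `u` and `v`, `u ≠ v`. -/
def IsCellEdge {n : ℕ} (V : Set (Fin n → ℝ)) (w : (Fin n → ℝ) → ℝ)
    (u v : Fin n → ℝ) : Prop :=
  u ∈ V ∧ v ∈ V ∧ u ≠ v ∧
  ∃ (a : Fin n → ℝ) (c : ℝ), (∀ z ∈ V, lin a z + c ≤ w z) ∧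
    lin a u + c = w u ∧ lin a v + c = w v ∧
    ∀ z ∈ V, lin a z + c = w z → z = u ∨ z = v

/-- The vertex set of `Δ(p,q;n)`: all indicator vectors `e_K` with `|K| ∈ {p,q}`. -/
def DeltaVerts (n p q : ℕ) : Set (Fin n → ℝ) :=
  {v | ∃ K : Finset (Fin n), (K.card = p ∨ K.card = q) ∧ v = eInd K}

/-- The vertex set of the face `Δ_{S,T}`: the vectors `e_{S∪{i}}` and `e_{T∖{i}}`
for `i ∈ T∖S`. -/
def DeltaSTVerts {n : ℕ} (S T : Finset (Fin n)) : Set (Fin n → ℝ) :=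
  {v | ∃ i ∈ T \ S, v = eInd (insert i S) ∨ v = eInd (T.erase i)}

/-- The vertex set of the cross-polytope `P_n`: `{±e_i : i ∈ [n]}`. -/
def CrossVerts (n : ℕ) : Set (Fin n → ℝ) :=
  {v | ∃ i : Fin n, v = eInd {i} ∨ v = -(eInd {i})}

/-- `M'` is a quotient of `M` (the matroids are concordant):
every flat of `M'` is a flat of `M`. -/
def MatroidQuotient {α : Type*} (M' M : Matroid α) : Prop :=
  ∀ F : Set α, M'.IsFlat F → M.IsFlat F


/-- General face lemma: maximizers of a linear functional over a convex hull
are the convex hull of the maximizing generators. -/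
lemma face_hull {E : Type} [AddCommGroup E] [Module ℝ E] (L : E →ₗ[ℝ] ℝ)
    (V : Set E) (M : ℝ) (hub : ∀ v ∈ V, L v ≤ M) (hne : ∃ v ∈ V, L v = M) :
    convexHull ℝ {v ∈ V | L v = M} =
      {x ∈ convexHull ℝ V | ∀ y ∈ convexHull ℝ V, L y ≤ L x} := by
  have hle : ∀ x ∈ convexHull ℝ V, L x ≤ M := fun x hx =>
    convexHull_min hub (convex_halfSpace_le (LinearMap.isLinear L) M) hx
  have heq : ∀ x ∈ convexHull ℝ {v ∈ V | L v = M}, L x = M := fun x hx =>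
    convexHull_min (fun v hv => hv.2) (convex_hyperplane (LinearMap.isLinear L) M) hx
  apply Set.Subset.antisymm
  · intro x hx
    refine ⟨convexHull_mono (Set.sep_subset _ _) hx, fun y hy => ?_⟩
    rw [heq x hx]; exact hle y hy
  · rintro x ⟨hx, hmax⟩
    obtain ⟨v₀, hv₀, hv₀M⟩ := hne
    have hxM : L x = M := le_antisymm (hle x hx)
      (hv₀M ▸ hmax v₀ (subset_convexHull ℝ V hv₀))
    rw [_root_.convexHull_eq] at hx
    obtain ⟨ι, t, w, z, hw0, hw1, hzV, hcm⟩ := hx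
    have hterm : ∀ i ∈ t, w i * (M - L (z i)) = 0 := by
      rw [← Finset.sum_eq_zero_iff_of_nonneg
        (fun i hi => mul_nonneg (hw0 i hi) (sub_nonneg.2 (hub _ (hzV i hi))))]
      have hLx : L x = ∑ i ∈ t, w i * L (z i) := by
        rw [← hcm, Finset.centerMass_eq_of_sum_1 _ _ hw1, map_sum]
        simp [map_smul, smul_eq_mul]
      have : ∑ i ∈ t, w i * (M - L (z i))
          = (∑ i ∈ t, w i) * M - ∑ i ∈ t, w i * L (z i) := by
        rw [Finset.sum_mul, ← Finset.sum_sub_distrib]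
        exact Finset.sum_congr rfl (fun i hi => by ring)
      rw [this, hw1, ← hLx, hxM]; ring
    have hx' : x = (t.filter fun i => w i ≠ 0).centerMass w z := by
      rw [Finset.centerMass_filter_ne_zero, hcm]
    rw [hx']
    apply Finset.centerMass_mem_convexHull
    · exact fun i hi => hw0 i (Finset.mem_filter.1 hi).1
    · rw [Finset.sum_filter_ne_zero, hw1]; norm_num
    · intro i hi
      obtain ⟨hit, hwi⟩ := Finset.mem_filter.1 hi
      refine ⟨hzV i hit, ?_⟩
      have := hterm i hit
      rcases mul_eq_zero.1 this with h | h
      · exact absurd h hwi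
      · linarith [sub_eq_zero.1 h]

/-- The linear functional x ↦ ∑_{i∈S} x i − ∑_{j∈Tᶜ} x j. -/
def Lmap {n : ℕ} (S T : Finset (Fin n)) : (Fin n → ℝ) →ₗ[ℝ] ℝ where
  toFun x := (∑ i ∈ S, x i) - (∑ j ∈ Tᶜ, x j)
  map_add' x y := by simp [Finset.sum_add_distrib]; ring
  map_smul' c x := by simp [Finset.mul_sum, mul_sub]

lemma Lmap_eInd {n : ℕ} (S T K : Finset (Fin n)) :
    Lmap S T (eInd K) = ((S ∩ K).card : ℝ) - ((K \ T).card : ℝ) := by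
  have h1 : (∑ i ∈ S, eInd K i) = ((S ∩ K).card : ℝ) := by
    simp only [eInd, Finset.sum_boole, Finset.filter_mem_eq_inter]
  have h2 : (∑ j ∈ Tᶜ, eInd K j) = ((K \ T).card : ℝ) := by
    simp only [eInd, Finset.sum_boole, Finset.filter_mem_eq_inter]
    congr 2
    rw [Finset.sdiff_eq_inter_compl, Finset.inter_comm]
  show (∑ i ∈ S, eInd K i) - (∑ j ∈ Tᶜ, eInd K j) = _
  rw [h1, h2]

lemma Lmap_ub {n p q : ℕ} (S T : Finset (Fin n)) :
    ∀ v ∈ DeltaVerts n p q, Lmap S T v ≤ (S.card : ℝ) := by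
  rintro v ⟨K, hK, rfl⟩
  rw [Lmap_eInd]
  have hSK : (S ∩ K).card ≤ S.card := Finset.card_le_card Finset.inter_subset_left
  have h1 : ((S ∩ K).card : ℝ) ≤ (S.card : ℝ) := by exact_mod_cast hSK
  have h2 : (0 : ℝ) ≤ ((K \ T).card : ℝ) := by positivity
  linarith

lemma vert_eq {n p q : ℕ} (hp : 1 ≤ p) (hpq : p ≤ q)
    (S T : Finset (Fin n)) (hST : S ⊆ T) (hS : S.card = p - 1) (hT : T.card = q + 1) :
    {v ∈ DeltaVerts n p q | Lmap S T v = (S.card : ℝ)} = DeltaSTVerts S T := by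
  ext v
  constructor
  · rintro ⟨⟨K, hK, rfl⟩, hLv⟩
    rw [Lmap_eInd] at hLv
    have hSK : (S ∩ K).card ≤ S.card := Finset.card_le_card Finset.inter_subset_left
    have h1 : ((S ∩ K).card : ℝ) ≤ (S.card : ℝ) := by exact_mod_cast hSK
    have h2 : (0 : ℝ) ≤ ((K \ T).card : ℝ) := by positivity
    have hb : ((K \ T).card : ℝ) = 0 := by linarith
    have ha : ((S ∩ K).card : ℝ) = (S.card : ℝ) := by linarith
    have hKT : K ⊆ T := by
      rw [← Finset.sdiff_eq_empty_iff_subset, ← Finset.card_eq_zero]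
      exact_mod_cast hb
    have hSsubK : S ⊆ K := by
      have h : S ∩ K = S := Finset.eq_of_subset_of_card_le Finset.inter_subset_left
        (le_of_eq (by exact_mod_cast ha.symm))
      exact Finset.inter_eq_left.1 h
    rcases hK with hKp | hKq
    · -- K = insert i S
      have hcd : (K \ S).card = 1 := by
        rw [Finset.card_sdiff_of_subset hSsubK, hKp, hS]; omega
      obtain ⟨i, hi⟩ := Finset.card_eq_one.1 hcd
      have hiK : i ∈ K \ S := hi ▸ Finset.mem_singleton_self i
      refine ⟨i, Finset.mem_sdiff.2 ⟨hKT (Finset.mem_sdiff.1 hiK).1,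
        (Finset.mem_sdiff.1 hiK).2⟩, Or.inl ?_⟩
      congr 1
      have : K = S ∪ (K \ S) := (Finset.union_sdiff_of_subset hSsubK).symm
      rw [this, hi, Finset.union_comm, ← Finset.insert_eq]
    · -- K = T.erase i
      have hcd : (T \ K).card = 1 := by
        rw [Finset.card_sdiff_of_subset hKT, hKq, hT]; omega
      obtain ⟨i, hi⟩ := Finset.card_eq_one.1 hcd
      have hiTK : i ∈ T \ K := hi ▸ Finset.mem_singleton_self i
      obtain ⟨hiT, hiK⟩ := Finset.mem_sdiff.1 hiTK
      refine ⟨i, Finset.mem_sdiff.2 ⟨hiT, fun hiS => hiK (hSsubK hiS)⟩, Or.inr ?_⟩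
      congr 1
      rw [Finset.erase_eq, ← hi, Finset.sdiff_sdiff_eq_self hKT]
  · rintro ⟨i, hiTS, hv | hv⟩ <;> obtain ⟨hiT, hiS⟩ := Finset.mem_sdiff.1 hiTS
    · subst hv
      refine ⟨⟨insert i S, Or.inl (by rw [Finset.card_insert_of_notMem hiS, hS]; omega), rfl⟩, ?_⟩
      rw [Lmap_eInd]
      have h1 : S ∩ insert i S = S := Finset.inter_eq_left.2 (Finset.subset_insert i S)
      have h2 : insert i S \ T = ∅ := Finset.sdiff_eq_empty_iff_subset.2
        (Finset.insert_subset hiT hST)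
      rw [h1, h2]; simp
    · subst hv
      refine ⟨⟨T.erase i, Or.inr (by rw [Finset.card_erase_of_mem hiT, hT]; omega), rfl⟩, ?_⟩
      rw [Lmap_eInd]
      have h1 : S ∩ T.erase i = S := Finset.inter_eq_left.2
        (Finset.subset_erase.2 ⟨hST, hiS⟩)
      have h2 : T.erase i \ T = ∅ := Finset.sdiff_eq_empty_iff_subset.2 (Finset.erase_subset i T)
      rw [h1, h2]; simp


/-- for `S ⊆ T` with `|S| = p-1`, `|T| = q+1`, the polytope
`Δ_{S,T} = Conv({e_{S∪{i}}, e_{T∖{i}} : i ∈ T∖S})` is the face of `Δ(p,q;n)` on which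
the linear functional `L(x) = Σ_{i∈S} x_i − Σ_{j∉T} x_j` is maximized. -/
theorem statement4 (n p q : ℕ) (hp : 1 ≤ p) (hpq : p ≤ q)
    (S T : Finset (Fin n)) (hST : S ⊆ T) (hS : S.card = p - 1) (hT : T.card = q + 1) :
    convexHull ℝ (DeltaSTVerts S T) =
      {x ∈ convexHull ℝ (DeltaVerts n p q) |
        ∀ y ∈ convexHull ℝ (DeltaVerts n p q),
          (∑ i ∈ S, y i) - (∑ j ∈ Tᶜ, y j) ≤ (∑ i ∈ S, x i) - (∑ j ∈ Tᶜ, x j)} := by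
  have hTS : (T \ S).Nonempty := Finset.card_pos.1 (by
    rw [Finset.card_sdiff_of_subset hST, hS, hT]; omega)
  obtain ⟨i, hi⟩ := hTS
  have hmem : eInd (insert i S) ∈ DeltaSTVerts S T := ⟨i, hi, Or.inl rfl⟩
  rw [← vert_eq hp hpq S T hST hS hT] at hmem
  have hne : ∃ v ∈ DeltaVerts n p q, Lmap S T v = (S.card : ℝ) := ⟨_, hmem.1, hmem.2⟩
  rw [← vert_eq hp hpq S T hST hS hT,
    face_hull (Lmap S T) (DeltaVerts n p q) (S.card : ℝ) (Lmap_ub S T) hne]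
  rfl
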